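/- For real numbers λ₁, λ₂, λ₃, pairwise distinct, each of absolute value strictly less than 1, and a nonnegative integer S, the triple sum ∑_{j₁=-∞}^{∞} ∑_{j₂=-∞}^{∞} λ₁^{|j₁|} λ₂^{|j₂|} λ₃^{|S-j₁-j₂|} equals λ₁^{S+2}(1-λ₂²)(1-λ₃²)/((λ₁-λ₂)(λ₁-λ₃)(1-λ₁λ₂)(1-λ₁λ₃)) + λ₂^{S+2}(1-λ₁²)(1-λ₃²)/((λ₂-λ₁)(λ₂-λ₃)(1-λ₂λ₁)(1-λ₂λ₃)) + λ₃^{S+2}(1-λ₁²)(1-λ₂²)/((λ₃-λ₁)(λ₃-λ₂)(1-λ₃λ₁)(1-λ₃λ₂)). -/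

import Mathlib

open Finset

noncomputable def Cc (a b : ℝ) : ℝ := a * (1 - b^2) / ((a - b) * (1 - a*b))

lemma abs_mul_lt_one' {a b : ℝ} (ha : |a| < 1) (hb : |b| < 1) : |a*b| < 1 := by
  rw [abs_mul]
  nlinarith [abs_nonneg a, abs_nonneg b]

lemma one_sub_mul_ne {a b : ℝ} (ha : |a| < 1) (hb : |b| < 1) : 1 - a*b ≠ 0 := by
  have h := abs_mul_lt_one' ha hb
  rcases abs_lt.mp h with ⟨h1, h2⟩
  intro h; nlinarith

lemma geoSum (a b : ℝ) (ha : |a| < 1) (hb : |b| < 1) (n : ℕ) :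
    HasSum (fun j : ℤ => a ^ j.natAbs * b ^ ((n:ℤ) - j).natAbs)
      ((a^(n+1) * b * (1 - a*b)⁻¹ + ∑ i ∈ range (n+1), a ^ i * b ^ (n - i)) +
        a * b^(n+1) * (1 - a*b)⁻¹) := by
  have hab : |a*b| < 1 := abs_mul_lt_one' ha hb
  have hgeo : HasSum (fun k : ℕ => (a*b)^k) (1 - a*b)⁻¹ := hasSum_geometric_of_abs_lt_one hab
  apply HasSum.of_nat_of_neg_add_one
  · -- nat part
    have hshift : HasSum (fun k : ℕ => a ^ ((k + (n+1) : ℕ) : ℤ).natAbs *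
        b ^ ((n:ℤ) - ((k + (n+1) : ℕ) : ℤ)).natAbs) (a^(n+1) * b * (1 - a*b)⁻¹) := by
      have h := hgeo.mul_left (a^(n+1) * b)
      convert h using 1
      · rfl
      ext k
      rw [show ((n:ℤ) - ((k + (n+1) : ℕ) : ℤ)).natAbs = k + 1 by omega,
          show (((k + (n+1) : ℕ) : ℤ)).natAbs = k + (n+1) by omega]
      ring
    have h := (hasSum_nat_add_iff (f := fun k : ℕ =>
        a ^ ((k : ℤ)).natAbs * b ^ ((n:ℤ) - (k : ℤ)).natAbs) (n+1)).mp hshift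
    convert h using 2
    · rfl
    apply Finset.sum_congr rfl
    intro i hi
    have hi' : i ≤ n := by simpa [Nat.lt_succ_iff] using Finset.mem_range.mp hi
    rw [show (((i:ℕ) : ℤ)).natAbs = i by omega,
        show ((n:ℤ) - (i : ℤ)).natAbs = n - i by omega]
  · -- negative part
    have h := hgeo.mul_left (a * b^(n+1))
    convert h using 1
    · rfl
    ext k
    rw [show ((-(↑k + 1) : ℤ)).natAbs = k + 1 by omega,
        show ((n:ℤ) - (-(↑k + 1))).natAbs = n + (k + 1) by omega]
    ring

lemma keyHasSum (a b : ℝ) (ha : |a| < 1) (hb : |b| < 1) (hab : a ≠ b) (m : ℤ) :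
    HasSum (fun j : ℤ => a ^ j.natAbs * b ^ (m - j).natAbs)
      (Cc a b * a ^ m.natAbs + Cc b a * b ^ m.natAbs) := by
  have hne : a - b ≠ 0 := sub_ne_zero.mpr hab
  have hne' : b - a ≠ 0 := sub_ne_zero.mpr hab.symm
  have h1 : 1 - a*b ≠ 0 := one_sub_mul_ne ha hb
  have main : ∀ n : ℕ, HasSum (fun j : ℤ => a ^ j.natAbs * b ^ ((n:ℤ) - j).natAbs)
      (Cc a b * a ^ n + Cc b a * b ^ n) := by
    intro n
    have h := geoSum a b ha hb n
    have hs := geom_sum₂_mul a b (n+1)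
    simp only [Nat.add_sub_cancel] at hs
    have hSig : (∑ i ∈ range (n+1), a ^ i * b ^ (n - i)) = (a^(n+1) - b^(n+1)) / (a - b) := by
      rw [eq_div_iff hne]; exact hs
    rw [hSig] at h
    have hv : (a^(n+1) * b * (1 - a*b)⁻¹ + (a^(n+1) - b^(n+1)) / (a - b)) +
        a * b^(n+1) * (1 - a*b)⁻¹ = Cc a b * a ^ n + Cc b a * b ^ n := by
      rw [Cc, Cc, show 1 - b*a = 1 - a*b by ring]
      generalize hc : 1 - a*b = c at h1 ⊢
      have hb : b * a = 1 - c := by rw [← hc]; ring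
      field_simp
      rw [← hc]
      ring
    rwa [hv] at h
  obtain ⟨n, hn | hn⟩ : ∃ n : ℕ, m = n ∨ m = -n := ⟨m.natAbs, m.natAbs_eq⟩
  · subst hn
    simpa using main n
  · subst hn
    have h := main n
    have hfun : (fun j : ℤ => a ^ j.natAbs * b ^ ((n:ℤ) - j).natAbs) =
        (fun j : ℤ => a ^ j.natAbs * b ^ ((-(n:ℤ)) - j).natAbs) ∘ (Equiv.neg ℤ) := by
      ext j
      simp only [Function.comp_apply, Equiv.neg_apply]
      rw [show ((-(n:ℤ)) - (-j)).natAbs = ((n:ℤ) - j).natAbs by omega, Int.natAbs_neg]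
    rw [hfun, (Equiv.neg ℤ).hasSum_iff] at h
    simpa using h

set_option maxHeartbeats 2000000 in
theorem stmt_6 (l1 l2 l3 : ℝ) (h1 : |l1| < 1) (h2 : |l2| < 1) (h3 : |l3| < 1)
    (h12 : l1 ≠ l2) (h13 : l1 ≠ l3) (h23 : l2 ≠ l3) (S : ℕ) :
    ∑' p : ℤ × ℤ, l1 ^ p.1.natAbs * l2 ^ p.2.natAbs * l3 ^ ((S : ℤ) - p.1 - p.2).natAbs =
      l1 ^ (S + 2) * (1 - l2 ^ 2) * (1 - l3 ^ 2) /
        ((l1 - l2) * (l1 - l3) * (1 - l1 * l2) * (1 - l1 * l3)) +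
      l2 ^ (S + 2) * (1 - l1 ^ 2) * (1 - l3 ^ 2) /
        ((l2 - l1) * (l2 - l3) * (1 - l2 * l1) * (1 - l2 * l3)) +
      l3 ^ (S + 2) * (1 - l1 ^ 2) * (1 - l2 ^ 2) /
        ((l3 - l1) * (l3 - l2) * (1 - l3 * l1) * (1 - l3 * l2)) := by
  set f2 : ℤ × ℤ → ℝ := fun p => l1 ^ p.1.natAbs * l2 ^ p.2.natAbs * l3 ^ ((S : ℤ) - p.1 - p.2).natAbs with hf2
  -- summability
  have hgg : ∀ x : ℝ, |x| < 1 → Summable (fun j : ℤ => |x| ^ j.natAbs) := by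
    intro x hx
    have hg : Summable (fun n : ℕ => |x| ^ n) :=
      (hasSum_geometric_of_abs_lt_one (r := |x|) (by rwa [abs_abs])).summable
    apply Summable.of_nat_of_neg
    · exact hg.congr fun n => by simp
    · exact hg.congr fun n => by simp
  have hgeo1 := hgg l1 h1
  have hgeo2 := hgg l2 h2
  have hprod : Summable (fun p : ℤ × ℤ => |l1| ^ p.1.natAbs * |l2| ^ p.2.natAbs) :=
    hgeo1.mul_of_nonneg hgeo2 (fun j => pow_nonneg (abs_nonneg _) _)
      (fun j => pow_nonneg (abs_nonneg _) _)
  have habs : Summable (fun p : ℤ × ℤ => |f2 p|) := by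
    apply Summable.of_nonneg_of_le (fun p => abs_nonneg _) _ hprod
    intro p
    rw [hf2]
    simp only [abs_mul, abs_pow]
    exact mul_le_of_le_one_right
      (mul_nonneg (pow_nonneg (abs_nonneg _) _) (pow_nonneg (abs_nonneg _) _))
      (pow_le_one₀ (abs_nonneg _) h3.le)
  have hsum : Summable f2 := habs.of_abs
  have hfiber : ∀ j1 : ℤ, Summable fun j2 => f2 (j1, j2) := by
    intro j1
    have h := (keyHasSum l2 l3 h2 h3 h23 ((S:ℤ) - j1)).mul_left (l1 ^ j1.natAbs)
    refine h.summable.congr fun j2 => ?_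
    rw [hf2]; ring
  rw [Summable.tsum_prod' hsum hfiber]
  have hinner : ∀ j1 : ℤ, ∑' j2, f2 (j1, j2) =
      Cc l2 l3 * (l1 ^ j1.natAbs * l2 ^ ((S:ℤ) - j1).natAbs) +
      Cc l3 l2 * (l1 ^ j1.natAbs * l3 ^ ((S:ℤ) - j1).natAbs) := by
    intro j1
    have h := (keyHasSum l2 l3 h2 h3 h23 ((S:ℤ) - j1)).mul_left (l1 ^ j1.natAbs)
    have h' : HasSum (fun j2 => f2 (j1, j2))
        (l1 ^ j1.natAbs * (Cc l2 l3 * l2 ^ ((S:ℤ) - j1).natAbs +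
          Cc l3 l2 * l3 ^ ((S:ℤ) - j1).natAbs)) := by
      refine h.congr_fun fun j2 => ?_
      rw [hf2]; ring
    rw [h'.tsum_eq]; ring
  simp only [hinner]
  have houter : HasSum (fun j1 : ℤ =>
      Cc l2 l3 * (l1 ^ j1.natAbs * l2 ^ ((S:ℤ) - j1).natAbs) +
      Cc l3 l2 * (l1 ^ j1.natAbs * l3 ^ ((S:ℤ) - j1).natAbs))
      (Cc l2 l3 * (Cc l1 l2 * l1 ^ S + Cc l2 l1 * l2 ^ S) +
       Cc l3 l2 * (Cc l1 l3 * l1 ^ S + Cc l3 l1 * l3 ^ S)) := by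
    have hA := (keyHasSum l1 l2 h1 h2 h12 (S:ℤ)).mul_left (Cc l2 l3)
    have hB := (keyHasSum l1 l3 h1 h3 h13 (S:ℤ)).mul_left (Cc l3 l2)
    have h := hA.add hB
    simpa using h
  rw [houter.tsum_eq]
  have hd12 : l1 - l2 ≠ 0 := sub_ne_zero.mpr h12
  have hd13 : l1 - l3 ≠ 0 := sub_ne_zero.mpr h13
  have hd23 : l2 - l3 ≠ 0 := sub_ne_zero.mpr h23
  have hd21 : l2 - l1 ≠ 0 := sub_ne_zero.mpr h12.symm
  have hd31 : l3 - l1 ≠ 0 := sub_ne_zero.mpr h13.symm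
  have hd32 : l3 - l2 ≠ 0 := sub_ne_zero.mpr h23.symm
  have he12 : 1 - l1 * l2 ≠ 0 := one_sub_mul_ne h1 h2
  have he13 : 1 - l1 * l3 ≠ 0 := one_sub_mul_ne h1 h3
  have he23 : 1 - l2 * l3 ≠ 0 := one_sub_mul_ne h2 h3
  have he21 : 1 - l2 * l1 ≠ 0 := one_sub_mul_ne h2 h1
  have he31 : 1 - l3 * l1 ≠ 0 := one_sub_mul_ne h3 h1
  have he32 : 1 - l3 * l2 ≠ 0 := one_sub_mul_ne h3 h2
  have e1 : Cc l2 l3 * Cc l1 l2 + Cc l3 l2 * Cc l1 l3 =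
      l1 ^ 2 * (1 - l2 ^ 2) * (1 - l3 ^ 2) /
        ((l1 - l2) * (l1 - l3) * (1 - l1 * l2) * (1 - l1 * l3)) := by
    simp only [Cc]
    field_simp
    ring
  have e2 : Cc l2 l3 * Cc l2 l1 =
      l2 ^ 2 * (1 - l1 ^ 2) * (1 - l3 ^ 2) /
        ((l2 - l1) * (l2 - l3) * (1 - l2 * l1) * (1 - l2 * l3)) := by
    simp only [Cc]
    field_simp
  have e3 : Cc l3 l2 * Cc l3 l1 =
      l3 ^ 2 * (1 - l1 ^ 2) * (1 - l2 ^ 2) /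
        ((l3 - l1) * (l3 - l2) * (1 - l3 * l1) * (1 - l3 * l2)) := by
    simp only [Cc]
    field_simp
  calc Cc l2 l3 * (Cc l1 l2 * l1 ^ S + Cc l2 l1 * l2 ^ S) +
        Cc l3 l2 * (Cc l1 l3 * l1 ^ S + Cc l3 l1 * l3 ^ S)
      = (Cc l2 l3 * Cc l1 l2 + Cc l3 l2 * Cc l1 l3) * l1 ^ S +
        (Cc l2 l3 * Cc l2 l1) * l2 ^ S + (Cc l3 l2 * Cc l3 l1) * l3 ^ S := by ring
    _ = _ := by
        rw [e1, e2, e3, pow_add l1 S 2, pow_add l2 S 2, pow_add l3 S 2]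
        field_simp
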